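/- Let C be a nonempty closed convex subset of a real normed linear space X and let (c_n) ⊂ C be a sequence with ‖c_n‖ → ∞. Assume at least one of the following conditions holds: (A) X is a reflexive Banach space and Int barc(C) ≠ ∅; (B) C is locally compact; (C) there exist r > 0 and a finite-dimensional linear subspace Z ⊆ X with C ⊆ B(0; r) + Z. Then there exist a subsequence (c_{n_k}) of (c_n), a functional x*₀ ∈ X* with ‖x*₀‖ = 1, and a number ρ > 0 such that ⟨x*₀, c_{n_k}/‖c_{n_k}‖⟩ → −ρ as k → ∞. -/

import Mathlib

open Filter Topology Pointwise

/-- The barrier cone of a set `C` in a normed space. -/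
def barrierCone {X : Type*} [NormedAddCommGroup X] [NormedSpace ℝ X] (C : Set X) :
    Set (X →L[ℝ] ℝ) :=
  {f | ∃ b : ℝ, ∀ c ∈ C, f c ≤ b}


lemma key_step {X : Type*} [NormedAddCommGroup X] [NormedSpace ℝ X]
    (c : ℕ → X) (hnorm : Tendsto (fun n => ‖c n‖) atTop atTop)
    (φ : ℕ → ℕ) (hφ : StrictMono φ) (u : X)
    (h : Tendsto (fun k => ‖c (φ k)‖⁻¹ • c (φ k)) atTop (nhds u)) :
    ∃ φ : ℕ → ℕ, StrictMono φ ∧ ∃ xs : X →L[ℝ] ℝ, ‖xs‖ = 1 ∧ ∃ ρ > (0 : ℝ),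
      Tendsto (fun k => xs (‖c (φ k)‖⁻¹ • c (φ k))) atTop (nhds (-ρ)) := by
  have hnφ : Tendsto (fun k => ‖c (φ k)‖) atTop atTop := hnorm.comp hφ.tendsto_atTop
  have hev : ∀ᶠ k in atTop, ‖(fun k => ‖c (φ k)‖⁻¹ • c (φ k)) k‖ = 1 := by
    filter_upwards [hnφ.eventually_ge_atTop 1] with k hk
    have hpos : (0:ℝ) < ‖c (φ k)‖ := lt_of_lt_of_le one_pos hk
    simp [norm_smul, abs_of_pos (inv_pos.2 hpos), inv_mul_cancel₀ hpos.ne']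
  have hu1 : ‖u‖ = 1 := by
    have h1 : Tendsto (fun k => ‖(fun k => ‖c (φ k)‖⁻¹ • c (φ k)) k‖) atTop (nhds ‖u‖) :=
      h.norm
    exact tendsto_nhds_unique (h1.congr' hev) tendsto_const_nhds
  have hu0 : u ≠ 0 := by intro h0; rw [h0, norm_zero] at hu1; norm_num at hu1
  obtain ⟨f, hf1, hfu⟩ := exists_dual_vector ℝ u (norm_ne_zero_iff.2 hu0)
  refine ⟨φ, hφ, -f, by simpa using hf1, 1, one_pos, ?_⟩
  have : Tendsto (fun k => f (‖c (φ k)‖⁻¹ • c (φ k))) atTop (nhds (f u)) :=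
    (f.continuous.tendsto u).comp h
  have := this.neg
  simp only [ContinuousLinearMap.neg_apply]
  convert this using 2
  rw [hfu, hu1]; norm_num


lemma caseB {X : Type*} [NormedAddCommGroup X] [NormedSpace ℝ X]
    (C : Set X) (hconv : Convex ℝ C)
    (c : ℕ → X) (hmem : ∀ n, c n ∈ C)
    (hnorm : Tendsto (fun n => ‖c n‖) atTop atTop)
    (c₀ : X) (hc₀ : c₀ ∈ C) (r : ℝ) (hr : 0 < r)
    (hK : IsCompact (C ∩ Metric.closedBall c₀ r)) :
    ∃ φ : ℕ → ℕ, StrictMono φ ∧ ∃ u : X,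
      Tendsto (fun k => ‖c (φ k)‖⁻¹ • c (φ k)) atTop (nhds u) := by
  set t : ℕ → ℝ := fun n => min 1 (r / ‖c n - c₀‖) with ht
  set y : ℕ → X := fun n => c₀ + t n • (c n - c₀) with hy
  have htnn : ∀ n, 0 ≤ t n := fun n => le_min one_pos.le (div_nonneg hr.le (norm_nonneg _))
  have ht1 : ∀ n, t n ≤ 1 := fun n => min_le_left _ _
  have hyC : ∀ n, y n ∈ C := by
    intro n
    have h1 : y n = (1 - t n) • c₀ + t n • c n := by
      simp only [hy, smul_sub, sub_smul, one_smul]; abel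
    rw [h1]
    exact hconv hc₀ (hmem n) (by linarith [ht1 n]) (htnn n) (by ring)
  have hyB : ∀ n, y n ∈ Metric.closedBall c₀ r := by
    intro n
    rw [Metric.mem_closedBall, dist_eq_norm]
    have : y n - c₀ = t n • (c n - c₀) := by simp [hy]
    rw [this, norm_smul, Real.norm_eq_abs, abs_of_nonneg (htnn n)]
    rcases eq_or_lt_of_le (norm_nonneg (c n - c₀)) with h | h
    · rw [← h, mul_zero]; exact hr.le
    · calc t n * ‖c n - c₀‖ ≤ (r / ‖c n - c₀‖) * ‖c n - c₀‖ :=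
            mul_le_mul_of_nonneg_right (min_le_right _ _) (norm_nonneg _)
        _ = r := div_mul_cancel₀ r h.ne'
  obtain ⟨yl, hylK, φ, hφ, hyl⟩ := hK.tendsto_subseq (fun n => ⟨hyC n, hyB n⟩)
  have hnφ : Tendsto (fun k => ‖c (φ k)‖) atTop atTop := hnorm.comp hφ.tendsto_atTop
  have hinv : Tendsto (fun k => ‖c (φ k)‖⁻¹) atTop (nhds 0) :=
    tendsto_inv_atTop_zero.comp hnφ
  -- the ratio s k = ‖c (φ k) - c₀‖ * ‖c (φ k)‖⁻¹ tends to 1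
  set s : ℕ → ℝ := fun k => ‖c (φ k) - c₀‖ * ‖c (φ k)‖⁻¹ with hs
  have hc0inv : Tendsto (fun k => ‖c₀‖ * ‖c (φ k)‖⁻¹) atTop (nhds 0) := by
    simpa using hinv.const_mul ‖c₀‖
  have hslo : Tendsto (fun k => 1 - ‖c₀‖ * ‖c (φ k)‖⁻¹) atTop (nhds 1) := by
    simpa using (tendsto_const_nhds (x := (1:ℝ))).sub hc0inv
  have hshi : Tendsto (fun k => 1 + ‖c₀‖ * ‖c (φ k)‖⁻¹) atTop (nhds 1) := by
    simpa using (tendsto_const_nhds (x := (1:ℝ))).add hc0inv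
  have hsl : Tendsto s atTop (nhds 1) := by
    apply tendsto_of_tendsto_of_tendsto_of_le_of_le' hslo hshi
    · filter_upwards [hnφ.eventually_ge_atTop 1] with k hk
      have hpos : (0:ℝ) < ‖c (φ k)‖ := lt_of_lt_of_le one_pos hk
      have h1 : ‖c (φ k)‖ - ‖c₀‖ ≤ ‖c (φ k) - c₀‖ := by
        have := norm_sub_norm_le (c (φ k)) c₀
        linarith [abs_le.1 (abs_norm_sub_norm_le (c (φ k)) c₀)]
      have := mul_le_mul_of_nonneg_right h1 (inv_nonneg.2 hpos.le)
      rw [sub_mul, mul_inv_cancel₀ hpos.ne'] at this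
      exact this
    · filter_upwards [hnφ.eventually_ge_atTop 1] with k hk
      have hpos : (0:ℝ) < ‖c (φ k)‖ := lt_of_lt_of_le one_pos hk
      have h1 : ‖c (φ k) - c₀‖ ≤ ‖c (φ k)‖ + ‖c₀‖ := norm_sub_le _ _
      have := mul_le_mul_of_nonneg_right h1 (inv_nonneg.2 hpos.le)
      rw [add_mul, mul_inv_cancel₀ hpos.ne'] at this
      exact this
  refine ⟨φ, hφ, r⁻¹ • (yl - c₀), ?_⟩
  have hmain : Tendsto (fun k => ‖c (φ k)‖⁻¹ • c₀ + (s k * r⁻¹) • (y (φ k) - c₀)) atTop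
      (nhds ((0:ℝ) • c₀ + ((1:ℝ) * r⁻¹) • (yl - c₀))) := by
    refine Tendsto.add (hinv.smul tendsto_const_nhds) ?_
    exact (hsl.mul tendsto_const_nhds).smul ((hyl.sub tendsto_const_nhds))
  rw [zero_smul, zero_add, one_mul] at hmain
  apply hmain.congr'
  filter_upwards [hnφ.eventually_ge_atTop (r + ‖c₀‖)] with k hk
  have hd : r ≤ ‖c (φ k) - c₀‖ := by
    have := abs_le.1 (abs_norm_sub_norm_le (c (φ k)) c₀)
    linarith
  have hdpos : (0:ℝ) < ‖c (φ k) - c₀‖ := lt_of_lt_of_le hr hd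
  have htk : t (φ k) = r / ‖c (φ k) - c₀‖ :=
    min_eq_right ((div_le_one hdpos).2 hd)
  have hyk : y (φ k) - c₀ = (r / ‖c (φ k) - c₀‖) • (c (φ k) - c₀) := by
    simp [hy, htk]
  rw [hyk, smul_smul]
  have hc1 : ‖c (φ k)‖ ≠ 0 := (lt_of_lt_of_le (by linarith [norm_nonneg c₀]) hk).ne'
  have hsc : s k * r⁻¹ * (r / ‖c (φ k) - c₀‖) = ‖c (φ k)‖⁻¹ := by
    rw [hs]; field_simp
  rw [hsc, smul_sub]
  module


lemma caseC {X : Type*} [NormedAddCommGroup X] [NormedSpace ℝ X]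
    (C : Set X) (c : ℕ → X) (hmem : ∀ n, c n ∈ C)
    (hnorm : Tendsto (fun n => ‖c n‖) atTop atTop)
    (r : ℝ) (hr : 0 < r) (Z : Submodule ℝ X) (hZ : FiniteDimensional ℝ Z)
    (hsub : C ⊆ Metric.ball (0 : X) r + (Z : Set X)) :
    ∃ φ : ℕ → ℕ, StrictMono φ ∧ ∃ u : X,
      Tendsto (fun k => ‖c (φ k)‖⁻¹ • c (φ k)) atTop (nhds u) := by
  have h := fun n => Set.mem_add.1 (hsub (hmem n))
  choose b hb z hz hbz using h
  have hbr : ∀ n, ‖b n‖ < r := by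
    intro n; have := hb n; rwa [Metric.mem_ball, dist_zero_right] at this
  set w : ℕ → Z := fun n =>
    if h : r ≤ ‖c n‖ then ⟨‖c n‖⁻¹ • z n, Z.smul_mem _ (hz n)⟩ else 0 with hw
  have hwb : ∀ n, w n ∈ Metric.closedBall (0 : Z) 2 := by
    intro n
    rw [Metric.mem_closedBall, dist_zero_right]
    by_cases h : r ≤ ‖c n‖
    · have hpos : (0:ℝ) < ‖c n‖ := lt_of_lt_of_le hr h
      have hzn : ‖z n‖ ≤ 2 * ‖c n‖ := by
        have : z n = c n - b n := by rw [← hbz n]; abel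
        rw [this]
        calc ‖c n - b n‖ ≤ ‖c n‖ + ‖b n‖ := norm_sub_le _ _
          _ ≤ 2 * ‖c n‖ := by linarith [(hbr n).le]
      have : ‖w n‖ = ‖c n‖⁻¹ * ‖z n‖ := by
        simp [hw, h, norm_smul, abs_of_pos (inv_pos.2 hpos)]
      rw [this]
      calc ‖c n‖⁻¹ * ‖z n‖ ≤ ‖c n‖⁻¹ * (2 * ‖c n‖) :=
            mul_le_mul_of_nonneg_left hzn (inv_nonneg.2 hpos.le)
        _ = 2 := by field_simp
    · simp [hw, h]
  obtain ⟨wl, _, φ, hφ, hwl⟩ := (isCompact_closedBall (0:Z) 2).tendsto_subseq hwb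
  have hnφ : Tendsto (fun k => ‖c (φ k)‖) atTop atTop := hnorm.comp hφ.tendsto_atTop
  have hinv : Tendsto (fun k => ‖c (φ k)‖⁻¹) atTop (nhds 0) :=
    tendsto_inv_atTop_zero.comp hnφ
  refine ⟨φ, hφ, (wl : X), ?_⟩
  have hwlX : Tendsto (fun k => ((w (φ k)) : X)) atTop (nhds (wl : X)) :=
    (continuous_subtype_val.tendsto wl).comp hwl
  have hbpart : Tendsto (fun k => ‖c (φ k)‖⁻¹ • b (φ k)) atTop (nhds 0) := by
    refine squeeze_zero_norm' (a := fun k => ‖c (φ k)‖⁻¹ * r) ?_ ?_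
    · filter_upwards [hnφ.eventually_ge_atTop 1] with k hk
      have hpos : (0:ℝ) < ‖c (φ k)‖ := lt_of_lt_of_le one_pos hk
      rw [norm_smul, Real.norm_eq_abs, abs_of_pos (inv_pos.2 hpos)]
      exact mul_le_mul_of_nonneg_left (hbr _).le (inv_nonneg.2 hpos.le)
    · simpa using hinv.mul_const r
  have hmain : Tendsto (fun k => ‖c (φ k)‖⁻¹ • b (φ k) + ((w (φ k)) : X)) atTop
      (nhds (0 + (wl : X))) := hbpart.add hwlX
  rw [zero_add] at hmain
  apply hmain.congr'
  filter_upwards [hnφ.eventually_ge_atTop r] with k hk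
  have : ((w (φ k)) : X) = ‖c (φ k)‖⁻¹ • z (φ k) := by simp [hw, hk]
  rw [this, ← smul_add, hbz]

set_option synthInstance.maxHeartbeats 1000000 in
lemma caseA {X : Type*} [NormedAddCommGroup X] [NormedSpace ℝ X]
    (C : Set X) (c : ℕ → X) (hmem : ∀ n, c n ∈ C)
    (hnorm : Tendsto (fun n => ‖c n‖) atTop atTop)
    (hint : (interior (barrierCone C)).Nonempty) :
    ∃ φ : ℕ → ℕ, StrictMono φ ∧ ∃ xs : X →L[ℝ] ℝ, ‖xs‖ = 1 ∧ ∃ ρ > (0 : ℝ),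
      Tendsto (fun k => xs (‖c (φ k)‖⁻¹ • c (φ k))) atTop (nhds (-ρ)) := by
  classical
  obtain ⟨f, hf⟩ := hint
  obtain ⟨ε, hε, hball⟩ := Metric.mem_nhds_iff.1 (mem_interior_iff_mem_nhds.1 hf)
  set A : ℕ → Set (X →L[ℝ] ℝ) := fun m => {g | ∀ x ∈ C, g x ≤ (m : ℝ)} with hA
  have hAcl : ∀ m, IsClosed (A m) := by
    intro m
    have : A m = ⋂ x ∈ C, {g : X →L[ℝ] ℝ | g x ≤ (m : ℝ)} := by
      ext g; simp [hA]
    rw [this]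
    exact isClosed_biInter fun x _ =>
      isClosed_le (ContinuousLinearMap.apply ℝ ℝ x).continuous continuous_const
  set F : ℕ → Set (X →L[ℝ] ℝ) := fun m =>
    (A m ∩ Metric.closedBall f (ε/2)) ∪ (Metric.ball f (ε/2))ᶜ with hF
  have hFcl : ∀ m, IsClosed (F m) :=
    fun m => ((hAcl m).inter Metric.isClosed_closedBall).union Metric.isOpen_ball.isClosed_compl
  have hFu : ⋃ m, F m = Set.univ := by
    rw [Set.eq_univ_iff_forall]
    intro g
    by_cases hg : g ∈ Metric.ball f (ε/2)
    · have hgbc : g ∈ barrierCone C :=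
        hball (Metric.ball_subset_ball (by linarith) hg)
      obtain ⟨b, hb⟩ := hgbc
      obtain ⟨m, hm⟩ := exists_nat_ge b
      exact Set.mem_iUnion.2 ⟨m, Or.inl ⟨fun x hx => (hb x hx).trans hm,
        Metric.ball_subset_closedBall hg⟩⟩
    · exact Set.mem_iUnion.2 ⟨0, Or.inr hg⟩
  have hdense := dense_iUnion_interior_of_closed hFcl hFu
  obtain ⟨g₁, hg₁mem, hg₁ball⟩ :=
    hdense.exists_mem_open (U := Metric.ball f (ε/2)) Metric.isOpen_ball
      ⟨f, Metric.mem_ball_self (by linarith)⟩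
  obtain ⟨m, hg₁int⟩ := Set.mem_iUnion.1 hg₁mem
  obtain ⟨δ, hδ, hδball⟩ := Metric.mem_nhds_iff.1 (mem_interior_iff_mem_nhds.1 hg₁int)
  set δ₂ : ℝ := ε/2 - dist g₁ f with hδ₂
  have hδ₂pos : 0 < δ₂ := by
    rw [hδ₂]; rw [Metric.mem_ball] at hg₁ball; linarith
  set δ0 : ℝ := min δ δ₂ with hδ0
  have hδ0pos : 0 < δ0 := lt_min hδ hδ₂pos
  have hAm : ∀ g ∈ Metric.ball g₁ δ0, ∀ x ∈ C, g x ≤ (m : ℝ) := by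
    intro g hg x hx
    have hgF : g ∈ F m := hδball (Metric.ball_subset_ball (min_le_left _ _) hg)
    have hgB : g ∈ Metric.ball f (ε/2) := by
      rw [Metric.mem_ball] at hg ⊢
      have := dist_triangle g g₁ f
      have := lt_of_lt_of_le hg (min_le_right _ _)
      rw [hδ₂] at this
      linarith
    rcases hgF with h | h
    · exact h.1 x hx
    · exact absurd hgB h
  have key : ∀ x ∈ C, g₁ x + (δ0/2) * ‖x‖ ≤ (m : ℝ) := by
    intro x hx
    by_cases hx0 : x = 0
    · have := hAm g₁ (Metric.mem_ball_self hδ0pos) x hx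
      rw [hx0]; rw [hx0] at this; simp only [norm_zero, mul_zero, add_zero]; exact this
    · obtain ⟨h, hh1, hhx⟩ := exists_dual_vector ℝ x (norm_ne_zero_iff.2 hx0)
      have hgm : g₁ + (δ0/2) • h ∈ Metric.ball g₁ δ0 := by
        have hns := norm_smul (δ0/2) h
        rw [Metric.mem_ball, dist_eq_norm, add_sub_cancel_left, hns,
          Real.norm_eq_abs, abs_of_pos (by linarith), hh1, mul_one]
        linarith
      have := hAm _ hgm x hx
      rw [ContinuousLinearMap.add_apply, ContinuousLinearMap.smul_apply, hhx,
        smul_eq_mul] at this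
      exact this
  set a : ℕ → ℝ := fun n => g₁ (‖c n‖⁻¹ • c n) with ha
  have hun : ∀ n, ‖‖c n‖⁻¹ • c n‖ ≤ 1 := by
    intro n
    rcases eq_or_ne ‖c n‖ 0 with h | h
    · simp [h]
    · rw [norm_smul, norm_inv, norm_norm, inv_mul_cancel₀ h]
  have habd : ∀ n, a n ∈ Set.Icc (-‖g₁‖) ‖g₁‖ := by
    intro n
    have h1 : |a n| ≤ ‖g₁‖ := by
      calc |a n| = ‖g₁ (‖c n‖⁻¹ • c n)‖ := (Real.norm_eq_abs _).symm
        _ ≤ ‖g₁‖ * ‖‖c n‖⁻¹ • c n‖ := g₁.le_opNorm _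
        _ ≤ ‖g₁‖ * 1 := mul_le_mul_of_nonneg_left (hun n) (norm_nonneg _)
        _ = ‖g₁‖ := mul_one _
    exact Set.mem_Icc.2 (abs_le.1 h1)
  obtain ⟨l, _, φ, hφ, hal⟩ :=
    tendsto_subseq_of_bounded (Metric.isBounded_Icc (-‖g₁‖) ‖g₁‖) habd
  have hnφ : Tendsto (fun k => ‖c (φ k)‖) atTop atTop := hnorm.comp hφ.tendsto_atTop
  have hinv : Tendsto (fun k => ‖c (φ k)‖⁻¹) atTop (nhds 0) :=
    tendsto_inv_atTop_zero.comp hnφ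
  have hub : ∀ᶠ k in atTop, (a ∘ φ) k ≤ (m : ℝ) * ‖c (φ k)‖⁻¹ - δ0/2 := by
    filter_upwards [hnφ.eventually_ge_atTop 1] with k hk
    have hpos : (0:ℝ) < ‖c (φ k)‖ := lt_of_lt_of_le one_pos hk
    have h1 := key (c (φ k)) (hmem (φ k))
    have h2 : a (φ k) = ‖c (φ k)‖⁻¹ * g₁ (c (φ k)) := by
      simp [ha, map_smul]
    have h3 := mul_le_mul_of_nonneg_left (by linarith : g₁ (c (φ k)) ≤ (m:ℝ) - (δ0/2) * ‖c (φ k)‖)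
      (inv_nonneg.2 hpos.le)
    rw [mul_sub] at h3
    have h4 : ‖c (φ k)‖⁻¹ * ((δ0/2) * ‖c (φ k)‖) = δ0/2 := by field_simp
    rw [h4] at h3
    simp only [Function.comp_apply]
    rw [h2]
    linarith [h3]
  have hrhs : Tendsto (fun k => (m : ℝ) * ‖c (φ k)‖⁻¹ - δ0/2) atTop (nhds (-(δ0/2))) := by
    have := (hinv.const_mul (m:ℝ)).sub (tendsto_const_nhds (x := δ0/2))
    simpa using this
  have hl2 : l ≤ -(δ0/2) := le_of_tendsto_of_tendsto hal hrhs hub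
  have hg₁ne : g₁ ≠ 0 := by
    intro h0
    have : Tendsto (a ∘ φ) atTop (nhds 0) := by
      have : (a ∘ φ) = fun _ => (0:ℝ) := by
        funext k; simp [ha, h0]
      rw [this]; exact tendsto_const_nhds
    have := tendsto_nhds_unique hal this
    rw [this] at hl2
    linarith
  have hgnorm : ‖g₁‖ ≠ 0 := norm_ne_zero_iff.2 hg₁ne
  have hgpos : (0:ℝ) < ‖g₁‖ := norm_pos_iff.2 hg₁ne
  refine ⟨φ, hφ, ‖g₁‖⁻¹ • g₁, ?_, -(‖g₁‖⁻¹ * l), ?_, ?_⟩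
  · have hns := norm_smul ‖g₁‖⁻¹ g₁
    rw [hns, norm_inv, norm_norm, inv_mul_cancel₀ hgnorm]
  · have : ‖g₁‖⁻¹ * l < 0 :=
      mul_neg_of_pos_of_neg (inv_pos.2 hgpos) (lt_of_le_of_lt hl2 (by linarith))
    linarith
  · have : Tendsto (fun k => ‖g₁‖⁻¹ * (a ∘ φ) k) atTop (nhds (‖g₁‖⁻¹ * l)) :=
      hal.const_mul _
    rw [neg_neg]
    exact this

/-- Let `C` be a nonempty closed convex subset of a real normed space `X` and
`(c_n) ⊆ C` with `‖c_n‖ → ∞`. If one of the conditions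
(A) `X` is a reflexive Banach space and `Int barc(C) ≠ ∅`,
(B) `C` is locally compact,
(C) `C ⊆ B(0; r) + Z` for some `r > 0` and finite-dimensional subspace `Z`,
holds, then some subsequence `(c_{n_k})` satisfies `⟨x*₀, c_{n_k}/‖c_{n_k}‖⟩ → -ρ` for some
norm-one functional `x*₀` and some `ρ > 0`. -/
theorem statement6 {X : Type*} [NormedAddCommGroup X] [NormedSpace ℝ X]
    (C : Set X) (hne : C.Nonempty) (hcl : IsClosed C) (hconv : Convex ℝ C)
    (c : ℕ → X) (hmem : ∀ n, c n ∈ C)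
    (hnorm : Tendsto (fun n => ‖c n‖) atTop atTop)
    (hcond :
      (CompleteSpace X ∧ Function.Surjective (NormedSpace.inclusionInDoubleDual ℝ X) ∧
        (interior (barrierCone C)).Nonempty) ∨
      (∃ c₀ ∈ C, ∃ r > (0 : ℝ), IsCompact (C ∩ Metric.closedBall c₀ r)) ∨
      (∃ r > (0 : ℝ), ∃ Z : Submodule ℝ X, FiniteDimensional ℝ Z ∧
        C ⊆ Metric.ball (0 : X) r + (Z : Set X))) :
    ∃ φ : ℕ → ℕ, StrictMono φ ∧ ∃ xs : X →L[ℝ] ℝ, ‖xs‖ = 1 ∧ ∃ ρ > (0 : ℝ),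
      Tendsto (fun k => xs (‖c (φ k)‖⁻¹ • c (φ k))) atTop (nhds (-ρ)) := by
  rcases hcond with ⟨_, _, hint⟩ | ⟨c₀, hc₀, r, hr, hK⟩ | ⟨r, hr, Z, hZ, hsub⟩
  · exact caseA C c hmem hnorm hint
  · obtain ⟨φ, hφ, u, h⟩ := caseB C hconv c hmem hnorm c₀ hc₀ r hr hK
    exact key_step c hnorm φ hφ u h
  · obtain ⟨φ, hφ, u, h⟩ := caseC C c hmem hnorm r hr Z hZ hsub
    exact key_step c hnorm φ hφ u h
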